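/- (Reconstruction Lemma) For any choice of points x̂_k ∈ V̂_k (1 ≤ k ≤ N) and every σ ∈ Ω^N, the measure μ is exactly reconstructed from its magnetization kernel: μ(σ) = ∫_0^1 ∏_{k=1}^{N} (1 + M̂_μ(x̂_k, y) σ_k)/2 dy. -/

import Mathlib

open Finset
open scoped Classical

/-- The spin value in Ω = {-1, 1} associated to a Boolean. -/
def spin (b : Bool) : ℝ := if b then 1 else -1

/-- Cumulative weights y_a = Σ_{a' ≤ a} μ(σ^{a'}) (0-indexed: Ycum a = Σ_{b < a} μ(σ^b)),
with respect to the enumeration e of Ω^N = {σ^a}. -/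
noncomputable def Ycum (N : ℕ) (μ : (Fin N → Bool) → ℝ)
    (e : Fin (2 ^ N) ≃ (Fin N → Bool)) (a : ℕ) : ℝ :=
  ∑ b ∈ univ.filter (fun b : Fin (2 ^ N) => (b : ℕ) < a), μ (e b)

/-- The magnetization kernel M̂_μ(x,y) = Σ_a Σ_k σ_k^a 1{x ∈ V̂_k} 1{y ∈ Ŝ_a}, where
V̂_k = [k/N, (k+1)/N) (0-indexed) and Ŝ_a = [Ycum a, Ycum (a+1)). -/
noncomputable def magKernel (N : ℕ) (μ : (Fin N → Bool) → ℝ)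
    (e : Fin (2 ^ N) ≃ (Fin N → Bool)) (x y : ℝ) : ℝ :=
  ∑ a : Fin (2 ^ N), ∑ k : Fin N,
    spin (e a k) *
      (if (k : ℝ) / N ≤ x ∧ x < ((k : ℕ) + 1 : ℝ) / N then 1 else 0) *
      (if Ycum N μ e a ≤ y ∧ y < Ycum N μ e ((a : ℕ) + 1) then 1 else 0)

lemma spin_mul_self (b : Bool) : spin b * spin b = 1 := by
  cases b <;> simp [spin]

lemma spin_mul_ne (b b' : Bool) (h : b ≠ b') : spin b * spin b' = -1 := by
  cases b <;> cases b' <;> simp_all [spin]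

lemma Ycum_mono (N : ℕ) (μ : (Fin N → Bool) → ℝ) (e : Fin (2 ^ N) ≃ (Fin N → Bool))
    (hμ0 : ∀ σ, 0 ≤ μ σ) : Monotone (Ycum N μ e) := by
  intro a b hab
  apply Finset.sum_le_sum_of_subset_of_nonneg
  · intro x hx
    simp only [mem_filter, mem_univ, true_and] at *
    omega
  · intro i _ _
    exact hμ0 _

lemma Ycum_zero (N : ℕ) (μ : (Fin N → Bool) → ℝ) (e : Fin (2 ^ N) ≃ (Fin N → Bool)) :
    Ycum N μ e 0 = 0 := by
  simp [Ycum]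

lemma Ycum_top (N : ℕ) (μ : (Fin N → Bool) → ℝ) (e : Fin (2 ^ N) ≃ (Fin N → Bool))
    (hμ1 : ∑ σ, μ σ = 1) : Ycum N μ e (2 ^ N) = 1 := by
  have h : univ.filter (fun b : Fin (2 ^ N) => (b : ℕ) < 2 ^ N) = univ := by
    ext b; simp [b.isLt]
  rw [Ycum, h, Equiv.sum_comp e μ, hμ1]

lemma Ycum_succ (N : ℕ) (μ : (Fin N → Bool) → ℝ) (e : Fin (2 ^ N) ≃ (Fin N → Bool))
    (a : Fin (2 ^ N)) :
    Ycum N μ e ((a : ℕ) + 1) = Ycum N μ e (a : ℕ) + μ (e a) := by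
  unfold Ycum
  have h : univ.filter (fun b : Fin (2 ^ N) => (b : ℕ) < (a : ℕ) + 1)
      = insert a (univ.filter (fun b : Fin (2 ^ N) => (b : ℕ) < (a : ℕ))) := by
    ext b
    simp only [mem_filter, mem_univ, true_and, mem_insert, Fin.ext_iff]
    omega
  rw [h, Finset.sum_insert (by simp)]
  ring

lemma magKernel_eval (N : ℕ) (hN : 0 < N) (μ : (Fin N → Bool) → ℝ)
    (hμ0 : ∀ σ, 0 ≤ μ σ) (e : Fin (2 ^ N) ≃ (Fin N → Bool))
    (xhat : Fin N → ℝ)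
    (hx : ∀ k : Fin N, (k : ℝ) / N ≤ xhat k ∧ xhat k < ((k : ℕ) + 1 : ℝ) / N)
    (a : Fin (2 ^ N)) (k : Fin N) (y : ℝ)
    (hy1 : Ycum N μ e (a : ℕ) ≤ y) (hy2 : y < Ycum N μ e ((a : ℕ) + 1)) :
    magKernel N μ e (xhat k) y = spin (e a k) := by
  have hNpos : (0 : ℝ) < N := by exact_mod_cast hN
  have Ym := Ycum_mono N μ e hμ0
  unfold magKernel
  rw [Finset.sum_eq_single a]
  · rw [Finset.sum_eq_single k]
    · rw [if_pos (hx k), if_pos ⟨hy1, hy2⟩]; ring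
    · intro k' _ hk'
      have : ¬((k' : ℝ) / N ≤ xhat k ∧ xhat k < ((k' : ℕ) + 1 : ℝ) / N) := by
        rcases lt_or_gt_of_ne (fun h => hk' (Fin.ext h) : (k' : ℕ) ≠ (k : ℕ)) with h | h
        · rintro ⟨h1, h2⟩
          have hle : ((k' : ℕ) + 1 : ℝ) / N ≤ (k : ℝ) / N := by
            apply div_le_div_of_nonneg_right ?_ hNpos.le
            · exact_mod_cast h
          exact absurd h2 (not_lt.2 (le_trans hle (hx k).1))
        · rintro ⟨h1, h2⟩
          have hle : ((k : ℕ) + 1 : ℝ) / N ≤ (k' : ℝ) / N := by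
            apply div_le_div_of_nonneg_right ?_ hNpos.le
            · exact_mod_cast h
          exact absurd h1 (not_le.2 (lt_of_lt_of_le (hx k).2 hle))
      rw [if_neg this]; ring
    · intro h; exact absurd (Finset.mem_univ k) h
  · intro a' _ ha'
    have : ¬(Ycum N μ e (a' : ℕ) ≤ y ∧ y < Ycum N μ e ((a' : ℕ) + 1)) := by
      rcases lt_or_gt_of_ne (fun h => ha' (Fin.ext h) : (a' : ℕ) ≠ (a : ℕ)) with h | h
      · rintro ⟨h1, h2⟩
        exact absurd h2 (not_lt.2 (le_trans (Ym (by omega)) hy1))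
      · rintro ⟨h1, h2⟩
        exact absurd h1 (not_le.2 (lt_of_lt_of_le hy2 (Ym (by omega))))
    rw [Finset.sum_eq_zero]
    intro k' _
    rw [if_neg this]; ring
  · intro h; exact absurd (Finset.mem_univ a) h

lemma prod_spin (N : ℕ) (a σ : Fin N → Bool) :
    ∏ k : Fin N, (1 + spin (a k) * spin (σ k)) / 2 = if a = σ then 1 else 0 := by
  by_cases h : a = σ
  · rw [if_pos h]
    apply Finset.prod_eq_one
    intro k _
    rw [h, spin_mul_self]; norm_num
  · rw [if_neg h]
    obtain ⟨k, hk⟩ : ∃ k, a k ≠ σ k := by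
      by_contra hc; push_neg at hc; exact h (funext hc)
    apply Finset.prod_eq_zero (Finset.mem_univ k)
    rw [spin_mul_ne _ _ hk]; norm_num

/-- Reconstruction Lemma: for any choice of points x̂_k ∈ V̂_k and every
σ ∈ Ω^N, μ(σ) = ∫₀¹ ∏_k (1 + M̂_μ(x̂_k, y) σ_k)/2 dy. -/
theorem reconstruction_lemma
    (N : ℕ) (hN : 0 < N)
    (μ : (Fin N → Bool) → ℝ) (hμ0 : ∀ σ, 0 ≤ μ σ) (hμ1 : ∑ σ, μ σ = 1)
    (e : Fin (2 ^ N) ≃ (Fin N → Bool))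
    (xhat : Fin N → ℝ)
    (hx : ∀ k : Fin N, (k : ℝ) / N ≤ xhat k ∧ xhat k < ((k : ℕ) + 1 : ℝ) / N)
    (σ : Fin N → Bool) :
    μ σ = ∫ y in (0 : ℝ)..1,
        ∏ k : Fin N, (1 + magKernel N μ e (xhat k) y * spin (σ k)) / 2 := by
  set f : ℝ → ℝ :=
    fun y => ∏ k : Fin N, (1 + magKernel N μ e (xhat k) y * spin (σ k)) / 2 with hf
  set Y : ℕ → ℝ := Ycum N μ e with hY
  have Ym : Monotone Y := Ycum_mono N μ e hμ0
  -- on each interval the integrand is constant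
  have key : ∀ a : Fin (2 ^ N), ∀ y, Y (a : ℕ) ≤ y → y < Y ((a : ℕ) + 1) →
      f y = if e a = σ then 1 else 0 := by
    intro a y h1 h2
    have hk : ∀ k : Fin N, magKernel N μ e (xhat k) y = spin (e a k) :=
      fun k => magKernel_eval N hN μ hμ0 e xhat hx a k y h1 h2
    rw [hf]
    simp only [hk]
    exact prod_spin N (e a) σ
  -- a.e. equality with the constant on each interval
  have hae : ∀ a : Fin (2 ^ N),
      (fun _ : ℝ => if e a = σ then (1 : ℝ) else 0)
        =ᶠ[MeasureTheory.ae (MeasureTheory.volume.restrict (Set.uIoc (Y (a : ℕ)) (Y ((a : ℕ) + 1))))]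
      f := by
    intro a
    have hab : Y (a : ℕ) ≤ Y ((a : ℕ) + 1) := Ym (by omega)
    have hB : ∀ᵐ y : ℝ, y ≠ Y ((a : ℕ) + 1) := by
      refine MeasureTheory.ae_iff.2 ?_
      simp only [not_not, Set.setOf_eq_eq_singleton]
      exact MeasureTheory.measure_singleton _
    refine (MeasureTheory.ae_restrict_iff' measurableSet_uIoc).2 ?_
    filter_upwards [hB] with y hy hmem
    rw [Set.uIoc_of_le hab] at hmem
    exact (key a y (le_of_lt hmem.1) (lt_of_le_of_ne hmem.2 hy)).symm
  -- value of each piece integral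
  have hpiece : ∀ a : Fin (2 ^ N),
      ∫ y in Y (a : ℕ)..Y ((a : ℕ) + 1), f y
        = μ (e a) * (if e a = σ then 1 else 0) := by
    intro a
    have hcongr : ∀ᵐ y : ℝ, y ∈ Set.uIoc (Y (a : ℕ)) (Y ((a : ℕ) + 1)) →
        f y = (if e a = σ then (1 : ℝ) else 0) := by
      have := (MeasureTheory.ae_restrict_iff' measurableSet_uIoc).1 (hae a)
      filter_upwards [this] with y hy hmem
      exact (hy hmem).symm
    rw [intervalIntegral.integral_congr_ae hcongr, intervalIntegral.integral_const,
      smul_eq_mul, hY, Ycum_succ N μ e a]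
    ring
  -- integrability of each piece
  have hint : ∀ i < 2 ^ N, IntervalIntegrable f MeasureTheory.volume
      (Y i) (Y (i + 1)) := by
    intro i hi
    exact (intervalIntegrable_const).congr_ae (hae ⟨i, hi⟩)
  have hsum := intervalIntegral.sum_integral_adjacent_intervals
    (f := f) (μ := MeasureTheory.volume) (a := Y) hint
  have h0 : Y 0 = 0 := Ycum_zero N μ e
  have h1 : Y (2 ^ N) = 1 := Ycum_top N μ e hμ1
  rw [h0, h1] at hsum
  rw [hf] at hsum ⊢
  rw [← hsum, ← Fin.sum_univ_eq_sum_range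
    (fun i => ∫ y in Y i..Y (i + 1), f y) (2 ^ N)]
  have : ∀ a : Fin (2 ^ N), (∫ y in Y (a : ℕ)..Y ((a : ℕ) + 1), f y)
      = μ (e a) * (if e a = σ then 1 else 0) := hpiece
  rw [Finset.sum_congr rfl (fun a _ => this a)]
  rw [Fintype.sum_eq_single (e.symm σ)]
  · simp
  · intro a ha
    have : e a ≠ σ := fun h => ha (by rw [← h]; simp)
    rw [if_neg this, mul_zero]
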